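/- Let u be a complex number with |u| = 1 and u ≠ 1, and let w be any nonzero complex number. Then there exists k ≥ 1 such that Re(u^k · w) ≤ 0. -/

import Mathlib

open Complex

lemma aux_cos_nonpos (θ φ : ℝ) (hθ : 0 < θ) (hπ : θ ≤ Real.pi) :
    ∃ k : ℕ, 1 ≤ k ∧ Real.cos (k * θ + φ) ≤ 0 := by
  have hpi := Real.pi_pos
  set m : ℤ := ⌈(φ + θ - Real.pi/2)/(2*Real.pi)⌉ with hm
  have hm1 : φ + θ - Real.pi/2 ≤ m * (2*Real.pi) := by
    have h := Int.le_ceil ((φ + θ - Real.pi/2)/(2*Real.pi))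
    rw [div_le_iff₀ (by linarith)] at h
    exact h
  set c : ℝ := Real.pi/2 + m*(2*Real.pi) with hc
  have hcφ : φ + θ ≤ c := by rw [hc]; linarith
  set k : ℕ := ⌈(c - φ)/θ⌉₊ with hk
  have hr0 : 0 < (c - φ)/θ := by
    apply div_pos _ hθ; linarith
  have hk1 : 1 ≤ k := Nat.one_le_ceil_iff.mpr hr0
  have hkl : c - φ ≤ k * θ := by
    have := Nat.le_ceil ((c - φ)/θ)
    rw [div_le_iff₀ hθ] at this
    exact this
  have hku : (k : ℝ) * θ < c - φ + θ := by
    have h2 : (k : ℝ) < (c - φ)/θ + 1 := Nat.ceil_lt_add_one hr0.le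
    have := mul_lt_mul_of_pos_right h2 hθ
    rwa [add_mul, one_mul, div_mul_cancel₀ _ hθ.ne'] at this
  refine ⟨k, hk1, ?_⟩
  have hper : Real.cos ((k:ℝ) * θ + φ) = Real.cos ((k:ℝ) * θ + φ - m * (2*Real.pi)) :=
    (Real.cos_sub_int_mul_two_pi _ m).symm
  rw [hper]
  apply Real.cos_nonpos_of_pi_div_two_le_of_le
  · have : c ≤ (k:ℝ) * θ + φ := by linarith
    rw [hc] at this; linarith
  · have : (k:ℝ) * θ + φ < c + θ := by linarith
    rw [hc] at this; linarith

theorem stmt_15 (u w : ℂ) (hu : ‖u‖ = 1) (hu1 : u ≠ 1) (hw : w ≠ 0) :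
    ∃ k : ℕ, 1 ≤ k ∧ (u ^ k * w).re ≤ 0 := by
  set θ := Complex.arg u with hθdef
  set φ := Complex.arg w with hφdef
  have hθne : θ ≠ 0 := by
    intro h
    apply hu1
    have h2 := Complex.norm_mul_exp_arg_mul_I u
    rw [← hθdef, h, hu] at h2
    simpa using h2.symm
  have hθmem := Complex.arg_mem_Ioc u
  rw [← hθdef] at hθmem
  obtain ⟨k, hk1, hcos⟩ : ∃ k : ℕ, 1 ≤ k ∧ Real.cos (k * θ + φ) ≤ 0 := by
    rcases lt_or_gt_of_ne hθne with h | h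
    · obtain ⟨k, hk, hc⟩ := aux_cos_nonpos (-θ) (-φ) (by linarith) (by linarith [hθmem.1])
      refine ⟨k, hk, ?_⟩
      rw [show (k:ℝ) * θ + φ = -((k:ℝ) * (-θ) + (-φ)) by ring, Real.cos_neg]
      exact hc
    · exact aux_cos_nonpos θ φ h hθmem.2
  refine ⟨k, hk1, ?_⟩
  have hu' : u = Complex.exp (θ * Complex.I) := by
    conv_lhs => rw [← Complex.norm_mul_exp_arg_mul_I u]
    rw [hu, ← hθdef, Complex.ofReal_one, one_mul]
  have hw' : w = (‖w‖ : ℂ) * Complex.exp (φ * Complex.I) := by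
    conv_lhs => rw [← Complex.norm_mul_exp_arg_mul_I w]
  have hre : (u ^ k * w).re = ‖w‖ * Real.cos (k * θ + φ) := by
    conv_lhs => rw [hu', hw', ← Complex.exp_nat_mul]
    rw [show Complex.exp ((k:ℂ) * (θ * Complex.I)) * ((‖w‖ : ℂ) * Complex.exp (φ * Complex.I))
        = (‖w‖ : ℂ) * Complex.exp ((((k:ℝ) * θ + φ : ℝ) : ℂ) * Complex.I) by
      rw [mul_left_comm, ← Complex.exp_add]; congr 1; push_cast; ring]
    rw [Complex.re_ofReal_mul, Complex.exp_ofReal_mul_I_re]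
  rw [hre]
  have := norm_nonneg w
  nlinarith
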